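/- Let K be a compact topological space, n ∈ ℕ, r ∈ ℕ, and let C, B : K → Matrix (Fin n) (Fin n) ℝ be continuous with C(z) and B(z) symmetric for all z ∈ K. Assume that for every z ∈ K, C(z) is positive semidefinite with rank C(z) = r, and that ker C(z) ⊆ ker B(z) (kernels of the induced linear maps). Then there exists h₀ > 0 such that for every z ∈ K and every h with 0 ≤ h ≤ h₀, the matrix C(z) + h² • B(z) is positive semidefinite. -/

import Mathlib

open Matrix Finset

namespace PsdPerturbAux

variable {n : ℕ}

lemma toEL_eigen {A : Matrix (Fin n) (Fin n) ℝ} (hA : A.IsHermitian) (j : Fin n) :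
    Matrix.toEuclideanLin A (hA.eigenvectorBasis j) =
      hA.eigenvalues j • hA.eigenvectorBasis j := by
  apply (WithLp.equiv 2 (Fin n → ℝ)).injective
  simp [Matrix.toEuclideanLin_apply, hA.mulVec_eigenvectorBasis]

lemma toEL_expand {A : Matrix (Fin n) (Fin n) ℝ} (hA : A.IsHermitian)
    (x : EuclideanSpace ℝ (Fin n)) :
    Matrix.toEuclideanLin A x =
      ∑ j, (hA.eigenvalues j * hA.eigenvectorBasis.repr x j) • hA.eigenvectorBasis j := by
  conv_lhs => rw [← hA.eigenvectorBasis.sum_repr x, map_sum]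
  refine Finset.sum_congr rfl fun j _ => ?_
  rw [_root_.map_smul, toEL_eigen hA, smul_smul, mul_comm]

lemma quad_repr {A : Matrix (Fin n) (Fin n) ℝ} (hA : A.IsHermitian)
    (x : EuclideanSpace ℝ (Fin n)) :
    (inner ℝ x (Matrix.toEuclideanLin A x) : ℝ) =
      ∑ j, hA.eigenvalues j * (hA.eigenvectorBasis.repr x j)^2 := by
  rw [toEL_expand hA, inner_sum]
  refine Finset.sum_congr rfl fun j _ => ?_
  rw [real_inner_smul_right, hA.eigenvectorBasis.repr_apply_apply, real_inner_comm]
  ring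

lemma normsq_repr (b : OrthonormalBasis (Fin n) ℝ (EuclideanSpace ℝ (Fin n)))
    (x : EuclideanSpace ℝ (Fin n)) :
    (inner ℝ x x : ℝ) = ∑ j, (b.repr x j)^2 := by
  rw [← b.sum_inner_mul_inner x x]
  refine Finset.sum_congr rfl fun j _ => ?_
  rw [b.repr_apply_apply, real_inner_comm]
  ring

lemma mem_ker_of_coords {A : Matrix (Fin n) (Fin n) ℝ} (hA : A.IsHermitian)
    (x : EuclideanSpace ℝ (Fin n))
    (h : ∀ j, hA.eigenvalues j * hA.eigenvectorBasis.repr x j = 0) :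
    x ∈ LinearMap.ker (Matrix.toEuclideanLin A) := by
  rw [LinearMap.mem_ker, toEL_expand hA]
  simp [h]

lemma quad_add_ker {A : Matrix (Fin n) (Fin n) ℝ} (hA : A.IsHermitian)
    (q p : EuclideanSpace ℝ (Fin n)) (hp : Matrix.toEuclideanLin A p = 0) :
    (inner ℝ (q + p) (Matrix.toEuclideanLin A (q + p)) : ℝ) =
      inner ℝ q (Matrix.toEuclideanLin A q) := by
  have hsym := (Matrix.isHermitian_iff_isSymmetric.1 hA)
  rw [map_add, hp, add_zero, inner_add_left]
  have : (inner ℝ p (Matrix.toEuclideanLin A q) : ℝ) = 0 := by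
    rw [← hsym p q, hp, inner_zero_left]
  rw [this, add_zero]

lemma coord_sq_le (x : EuclideanSpace ℝ (Fin n)) (i : Fin n) :
    |x i| ≤ Real.sqrt (inner ℝ x x : ℝ) := by
  have h1 : (inner ℝ x x : ℝ) = ∑ j, (x j)^2 := by
    rw [PiLp.inner_apply]
    refine Finset.sum_congr rfl fun j _ => ?_
    simp [sq, mul_comm]
  rw [h1, ← Real.sqrt_sq_eq_abs]
  exact Real.sqrt_le_sqrt (Finset.single_le_sum (fun j _ => sq_nonneg (x j)) (mem_univ i))

lemma quad_abs_le (A : Matrix (Fin n) (Fin n) ℝ) (x : EuclideanSpace ℝ (Fin n)) :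
    |(inner ℝ x (Matrix.toEuclideanLin A x) : ℝ)| ≤
      (∑ i, ∑ j, |A i j|) * (inner ℝ x x : ℝ) := by
  have hx : (0:ℝ) ≤ inner ℝ x x := real_inner_self_nonneg
  have hs : Real.sqrt (inner ℝ x x : ℝ) * Real.sqrt (inner ℝ x x : ℝ) = inner ℝ x x :=
    Real.mul_self_sqrt hx
  have h1 : (inner ℝ x (Matrix.toEuclideanLin A x) : ℝ) = ∑ i, ∑ j, x i * (A i j * x j) := by
    simp [PiLp.inner_apply, Matrix.toEuclideanLin_apply, mulVec, dotProduct, Finset.mul_sum]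
    refine Finset.sum_congr rfl fun i _ => ?_
    rw [Finset.sum_mul]
    refine Finset.sum_congr rfl fun j _ => ?_
    ring
  rw [h1]
  calc |∑ i, ∑ j, x i * (A i j * x j)| ≤ ∑ i, ∑ j, |x i * (A i j * x j)| := by
        refine (Finset.abs_sum_le_sum_abs _ _).trans ?_
        exact Finset.sum_le_sum fun i _ => Finset.abs_sum_le_sum_abs _ _
    _ ≤ ∑ i, ∑ j, |A i j| * (inner ℝ x x : ℝ) := by
        refine Finset.sum_le_sum fun i _ => Finset.sum_le_sum fun j _ => ?_
        rw [abs_mul, abs_mul]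
        calc |x i| * (|A i j| * |x j|) = |A i j| * (|x i| * |x j|) := by ring
          _ ≤ |A i j| * (Real.sqrt (inner ℝ x x : ℝ) * Real.sqrt (inner ℝ x x : ℝ)) := by
              refine mul_le_mul_of_nonneg_left ?_ (abs_nonneg _)
              exact mul_le_mul (coord_sq_le x i) (coord_sq_le x j) (abs_nonneg _)
                (Real.sqrt_nonneg _)
          _ = |A i j| * (inner ℝ x x : ℝ) := by rw [hs]
    _ = (∑ i, ∑ j, |A i j|) * (inner ℝ x x : ℝ) := by
        rw [Finset.sum_mul]; congr 1; ext i; rw [Finset.sum_mul]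

lemma quad_dot (A : Matrix (Fin n) (Fin n) ℝ) (x : Fin n → ℝ) :
    dotProduct (star x) (A *ᵥ x) =
      (inner ℝ ((WithLp.equiv 2 (Fin n → ℝ)).symm x)
        (Matrix.toEuclideanLin A ((WithLp.equiv 2 (Fin n → ℝ)).symm x)) : ℝ) := by
  simp [dotProduct, PiLp.inner_apply, Matrix.toEuclideanLin_apply, mulVec]
  refine Finset.sum_congr rfl fun i _ => ?_
  ring

lemma exists_common (r : ℕ) (hrn : r ≤ n)
    (b b' : OrthonormalBasis (Fin n) ℝ (EuclideanSpace ℝ (Fin n)))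
    (S S' : Finset (Fin n)) (hS : S.card = r) (hS' : S'.card = r) (i₀ : Fin n)
    (hi₀ : i₀ ∈ S') (hr : 1 ≤ r) :
    ∃ x : EuclideanSpace ℝ (Fin n), x ≠ 0 ∧ (∀ j ∉ S, b.repr x j = 0) ∧
      (∀ j ∈ S'.erase i₀, b'.repr x j = 0) := by
  classical
  let L1 : EuclideanSpace ℝ (Fin n) →ₗ[ℝ] ({j // j ∈ Sᶜ} → ℝ) :=
    (LinearMap.funLeft ℝ ℝ (Subtype.val)) ∘ₗ
      (WithLp.linearEquiv 2 ℝ (Fin n → ℝ)).toLinearMap ∘ₗ b.repr.toLinearEquiv.toLinearMap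
  let L2 : EuclideanSpace ℝ (Fin n) →ₗ[ℝ] ({j // j ∈ S'.erase i₀} → ℝ) :=
    (LinearMap.funLeft ℝ ℝ (Subtype.val)) ∘ₗ
      (WithLp.linearEquiv 2 ℝ (Fin n → ℝ)).toLinearMap ∘ₗ b'.repr.toLinearEquiv.toLinearMap
  have hker : LinearMap.ker (L1.prod L2) ≠ ⊥ := by
    apply LinearMap.ker_ne_bot_of_finrank_lt
    rw [Module.finrank_prod, Module.finrank_pi, Module.finrank_pi, finrank_euclideanSpace]
    simp only [Fintype.card_coe, Fintype.card_fin]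
    rw [Finset.card_compl, Finset.card_erase_of_mem hi₀, hS, hS']
    simp only [Fintype.card_fin]
    omega
  obtain ⟨x, hx, hx0⟩ := Submodule.ne_bot_iff _ |>.1 hker
  rw [LinearMap.mem_ker] at hx
  have h1 : L1 x = 0 := congrArg Prod.fst hx
  have h2 : L2 x = 0 := congrArg Prod.snd hx
  refine ⟨x, hx0, ?_, ?_⟩
  · intro j hj
    have := congrFun h1 ⟨j, by simpa using hj⟩
    simpa [L1, LinearMap.funLeft] using this
  · intro j hj
    have := congrFun h2 ⟨j, hj⟩
    simpa [L2, LinearMap.funLeft] using this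

end PsdPerturbAux
namespace PsdPerturbAux

set_option maxHeartbeats 1000000

lemma inner_self_pos' {n : ℕ} {x : EuclideanSpace ℝ (Fin n)} (hx : x ≠ 0) :
    (0:ℝ) < inner ℝ x x := by
  rw [real_inner_self_eq_norm_sq]
  have h : 0 < ‖x‖ := norm_pos_iff.2 hx
  positivity

lemma local_psd {n r : ℕ} (hr : 1 ≤ r) (A : Matrix (Fin n) (Fin n) ℝ)
    (hA : A.PosSemidef) (hrk : A.rank = r) :
    ∃ μ : ℝ, 0 < μ ∧ ∀ (A' B' : Matrix (Fin n) (Fin n) ℝ), A'.PosSemidef → A'.rank = r →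
      B'.IsHermitian →
      LinearMap.ker (Matrix.toEuclideanLin A') ≤ LinearMap.ker (Matrix.toEuclideanLin B') →
      (∑ i, ∑ j, |A' i j - A i j|) ≤ μ/4 →
      ∀ t : ℝ, 0 ≤ t → t * (∑ i, ∑ j, |B' i j|) ≤ μ/4 → (A' + t • B').PosSemidef := by
  classical
  set lam := hA.1.eigenvalues with hlam
  set b := hA.1.eigenvectorBasis with hb
  set S : Finset (Fin n) := univ.filter (fun j => lam j ≠ 0) with hSdef
  have hScard : S.card = r := by
    rw [← hrk, hA.1.rank_eq_card_non_zero_eigs, Fintype.card_subtype]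
  have hSne : S.Nonempty := Finset.card_pos.mp (by omega)
  have hrn : r ≤ n := by
    rw [← hScard]
    simpa using Finset.card_le_univ S
  set μ : ℝ := S.inf' hSne lam with hμdef
  have hμpos : 0 < μ := by
    rw [hμdef, Finset.lt_inf'_iff]
    intro j hj
    exact lt_of_le_of_ne (hA.eigenvalues_nonneg j) (Ne.symm (Finset.mem_filter.1 hj).2)
  have hμle : ∀ j ∈ S, μ ≤ lam j := fun j hj => Finset.inf'_le lam hj
  refine ⟨μ, hμpos, ?_⟩
  intro A' B' hA' hrk' hB' hkerAB hAclose t ht htB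
  set lam' := hA'.1.eigenvalues with hlam'
  set b' := hA'.1.eigenvectorBasis with hb'
  set S' : Finset (Fin n) := univ.filter (fun j => lam' j ≠ 0) with hS'def
  have hS'card : S'.card = r := by
    rw [← hrk', hA'.1.rank_eq_card_non_zero_eigs, Fintype.card_subtype]
  have hS'ne : S'.Nonempty := Finset.card_pos.mp (by omega)
  set μ' : ℝ := S'.inf' hS'ne lam' with hμ'def
  have hμ'pos : 0 < μ' := by
    rw [hμ'def, Finset.lt_inf'_iff]
    intro j hj
    exact lt_of_le_of_ne (hA'.eigenvalues_nonneg j) (Ne.symm (Finset.mem_filter.1 hj).2)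
  have hμ'le : ∀ j ∈ S', μ' ≤ lam' j := fun j hj => Finset.inf'_le lam' hj
  have hlamz : ∀ j ∉ S', lam' j = 0 := by
    intro j hj
    by_contra hne
    exact hj (Finset.mem_filter.2 ⟨Finset.mem_univ j, hne⟩)
  have hlamz0 : ∀ j ∉ S, lam j = 0 := by
    intro j hj
    by_contra hne
    exact hj (Finset.mem_filter.2 ⟨Finset.mem_univ j, hne⟩)
  obtain ⟨i₀, hi₀S, hi₀eq⟩ := Finset.exists_mem_eq_inf' hS'ne lam'
  -- the comparison vector
  obtain ⟨x₀, hx₀ne, hx₀S, hx₀S'⟩ := exists_common r hrn b b' S S' hScard hS'card i₀ hi₀S hr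
  have hx₀pos : (0:ℝ) < inner ℝ x₀ x₀ := inner_self_pos' hx₀ne
  -- bound μ' from below
  have hq1 : (inner ℝ x₀ (Matrix.toEuclideanLin A' x₀) : ℝ) ≤ μ' * (inner ℝ x₀ x₀ : ℝ) := by
    rw [quad_repr hA'.1, normsq_repr b', Finset.mul_sum]
    refine Finset.sum_le_sum fun j _ => ?_
    by_cases hj : j ∈ S'
    · by_cases hji : j = i₀
      · subst hji
        rw [← hb', ← hlam', ← hi₀eq]
      · rw [← hb', hx₀S' j (Finset.mem_erase.2 ⟨hji, hj⟩)]
        simp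
    · rw [← hlam', hlamz j hj]
      have := sq_nonneg (b'.repr x₀ j)
      nlinarith [hμ'pos]
  have hq2 : μ * (inner ℝ x₀ x₀ : ℝ) ≤ (inner ℝ x₀ (Matrix.toEuclideanLin A x₀) : ℝ) := by
    rw [quad_repr hA.1, normsq_repr b, Finset.mul_sum]
    refine Finset.sum_le_sum fun j _ => ?_
    by_cases hj : j ∈ S
    · exact mul_le_mul_of_nonneg_right (hμle j hj) (sq_nonneg _)
    · rw [← hb, hx₀S j hj, ← hlam, hlamz0 j hj]
      simp
  have hq3 : |(inner ℝ x₀ (Matrix.toEuclideanLin A' x₀) : ℝ) -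
      (inner ℝ x₀ (Matrix.toEuclideanLin A x₀) : ℝ)| ≤ (μ/4) * (inner ℝ x₀ x₀ : ℝ) := by
    have hd : (inner ℝ x₀ (Matrix.toEuclideanLin A' x₀) : ℝ) -
        (inner ℝ x₀ (Matrix.toEuclideanLin A x₀) : ℝ) =
        inner ℝ x₀ (Matrix.toEuclideanLin (A' - A) x₀) := by
      rw [map_sub, LinearMap.sub_apply, inner_sub_right]
    rw [hd]
    refine (quad_abs_le (A' - A) x₀).trans ?_
    refine mul_le_mul_of_nonneg_right ?_ (le_of_lt hx₀pos)
    simpa using hAclose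
  have hμ'bound : 3/4 * μ ≤ μ' := by
    have habs := abs_le.1 hq3
    have hchain : (3/4 * μ) * (inner ℝ x₀ x₀ : ℝ) ≤ μ' * (inner ℝ x₀ x₀ : ℝ) := by
      nlinarith [habs.1, habs.2, hq1, hq2]
    exact le_of_mul_le_mul_right hchain hx₀pos
  -- prove PosSemidef
  rw [Matrix.posSemidef_iff_dotProduct_mulVec]
  constructor
  · rw [Matrix.IsHermitian, Matrix.conjTranspose_add, Matrix.conjTranspose_smul,
      hA'.1.eq, hB'.eq, star_trivial]
  intro v
  rw [quad_dot]
  set x : EuclideanSpace ℝ (Fin n) := (WithLp.equiv 2 (Fin n → ℝ)).symm v with hx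
  rw [map_add, _root_.map_smul, LinearMap.add_apply, LinearMap.smul_apply, inner_add_right,
    inner_smul_right]
  -- decompose x
  set c : Fin n → ℝ := fun j => b'.repr x j with hc
  set q : EuclideanSpace ℝ (Fin n) := ∑ j ∈ S', c j • b' j with hq
  set p : EuclideanSpace ℝ (Fin n) := x - q with hp
  have hqp : q + p = x := by rw [hp]; abel
  have horth := orthonormal_iff_ite.1 b'.orthonormal
  have hqrepr : ∀ k, b'.repr q k = if k ∈ S' then c k else 0 := by
    intro k
    rw [b'.repr_apply_apply, hq, inner_sum]
    calc ∑ j ∈ S', (inner ℝ (b' k) (c j • b' j) : ℝ) = ∑ j ∈ S', (if k = j then c j else 0) := by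
          refine Finset.sum_congr rfl fun j _ => ?_
          rw [real_inner_smul_right, horth k j]
          by_cases h : k = j <;> simp [h]
      _ = if k ∈ S' then c k else 0 := Finset.sum_ite_eq S' k (fun j => c j)
  have hpker : p ∈ LinearMap.ker (Matrix.toEuclideanLin A') := by
    refine mem_ker_of_coords hA'.1 p (fun j => ?_)
    have hrp : b'.repr p j = c j - b'.repr q j := by
      rw [hp, map_sub]; simp [hc]
    rw [← hb', ← hlam', hrp, hqrepr j]
    by_cases hj : j ∈ S'
    · simp [hj]
    · rw [hlamz j hj, zero_mul]
  have hBp : Matrix.toEuclideanLin B' p = 0 := hkerAB hpker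
  have hBq : (inner ℝ x (Matrix.toEuclideanLin B' x) : ℝ) =
      inner ℝ q (Matrix.toEuclideanLin B' q) := by
    rw [← hqp]; exact quad_add_ker hB' q p hBp
  have hqq : (inner ℝ q q : ℝ) = ∑ j ∈ S', (c j)^2 := by
    rw [normsq_repr b']
    calc ∑ j, (b'.repr q j)^2 = ∑ j, (if j ∈ S' then (c j)^2 else 0) := by
          refine Finset.sum_congr rfl fun j _ => ?_
          rw [hqrepr j]
          by_cases h : j ∈ S' <;> simp [h]
      _ = ∑ j ∈ S', (c j)^2 := by rw [Finset.sum_ite_mem, Finset.univ_inter]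
  have hqqnn : (0:ℝ) ≤ inner ℝ q q := real_inner_self_nonneg
  have hA'x : μ' * (inner ℝ q q : ℝ) ≤ (inner ℝ x (Matrix.toEuclideanLin A' x) : ℝ) := by
    rw [quad_repr hA'.1 x, hqq, Finset.mul_sum]
    have hsplit : ∑ j, lam' j * (b'.repr x j)^2 = ∑ j ∈ S', lam' j * (c j)^2 := by
      refine (Finset.sum_subset (Finset.subset_univ S') ?_).symm
      intro j _ hj
      rw [hlamz j hj, zero_mul]
    rw [← hb', ← hlam', hsplit]
    exact Finset.sum_le_sum fun j hj => mul_le_mul_of_nonneg_right (hμ'le j hj) (sq_nonneg _)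
  have hBbound := abs_le.1 (quad_abs_le B' q)
  have h5 : -((t * ∑ i, ∑ j, |B' i j|) * (inner ℝ q q : ℝ)) ≤
      t * (inner ℝ q (Matrix.toEuclideanLin B' q) : ℝ) := by
    calc -((t * ∑ i, ∑ j, |B' i j|) * (inner ℝ q q : ℝ))
        = t * (-((∑ i, ∑ j, |B' i j|) * (inner ℝ q q : ℝ))) := by ring
      _ ≤ t * (inner ℝ q (Matrix.toEuclideanLin B' q) : ℝ) :=
          mul_le_mul_of_nonneg_left hBbound.1 ht
  have h6 : (t * ∑ i, ∑ j, |B' i j|) * (inner ℝ q q : ℝ) ≤ (μ/4) * (inner ℝ q q : ℝ) :=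
    mul_le_mul_of_nonneg_right htB hqqnn
  have h7 : (3/4 * μ) * (inner ℝ q q : ℝ) ≤ (inner ℝ x (Matrix.toEuclideanLin A' x) : ℝ) :=
    le_trans (mul_le_mul_of_nonneg_right hμ'bound hqqnn) hA'x
  have h8 : (0:ℝ) ≤ (μ/2) * (inner ℝ q q : ℝ) :=
    mul_nonneg (by linarith) hqqnn
  rw [hBq]
  linarith

end PsdPerturbAux

open PsdPerturbAux



/-- Uniform positive semidefiniteness of a perturbed family: if `C z` is a continuous
family of symmetric positive semidefinite matrices of constant rank `r` over a compact
space `K`, and `B z` is a continuous family of symmetric matrices with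
`ker (C z) ⊆ ker (B z)`, then there is `h₀ > 0` such that `C z + h² • B z` is positive
semidefinite for all `z ∈ K` and all `0 ≤ h ≤ h₀`. -/
theorem posSemidef_of_small_symmetric_perturbation
    (K : Type*) [TopologicalSpace K] [CompactSpace K] (n r : ℕ)
    (C B : K → Matrix (Fin n) (Fin n) ℝ)
    (hCcont : Continuous C) (hBcont : Continuous B)
    (hCsym : ∀ z, (C z).IsSymm) (hBsym : ∀ z, (B z).IsSymm)
    (hpsd : ∀ z, (C z).PosSemidef) (hrank : ∀ z, (C z).rank = r)
    (hker : ∀ z, LinearMap.ker (Matrix.toEuclideanLin (C z)) ≤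
      LinearMap.ker (Matrix.toEuclideanLin (B z))) :
    ∃ h₀ > (0 : ℝ), ∀ z : K, ∀ h : ℝ, 0 ≤ h → h ≤ h₀ →
      (C z + h ^ 2 • B z).PosSemidef := by
  classical
  have hherm : ∀ z, (B z).IsHermitian := fun z => by
    rw [Matrix.IsHermitian, Matrix.conjTranspose_eq_transpose_of_trivial]
    exact hBsym z
  rcases isEmpty_or_nonempty K with hK | hK
  · exact ⟨1, one_pos, fun z => (IsEmpty.false z).elim⟩
  rcases Nat.eq_zero_or_pos r with hr0 | hrpos
  · -- degenerate case `r = 0`: both families vanish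
    subst hr0
    refine ⟨1, one_pos, fun z h _ _ => ?_⟩
    have hC0 : C z = 0 := by
      have h1 : LinearMap.range (C z).mulVecLin = ⊥ := by
        rw [← Submodule.finrank_eq_zero (R := ℝ)]
        exact hrank z
      ext i j
      have h2 : (C z).mulVecLin (Pi.single j 1) ∈ LinearMap.range (C z).mulVecLin :=
        LinearMap.mem_range_self _ _
      rw [h1, Submodule.mem_bot] at h2
      have h3 := congrFun h2 i
      simpa [Matrix.mulVecLin_apply, Matrix.mulVec_single] using h3
    have hB0 : B z = 0 := by
      have hT : Matrix.toEuclideanLin (B z) = 0 := by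
        apply LinearMap.ext; intro x
        have hx : x ∈ LinearMap.ker (Matrix.toEuclideanLin (C z)) := by
          rw [LinearMap.mem_ker, hC0]
          simp
        simpa using hker z hx
      apply Matrix.toEuclideanLin.injective
      rw [hT, map_zero]
    rw [hC0, hB0]
    simpa using Matrix.PosSemidef.zero (n := Fin n) (R := ℝ)
  -- main case `1 ≤ r`
  set g : K → ℝ := fun z => ∑ i, ∑ j, |B z i j| with hg
  have hgcont : Continuous g :=
    continuous_finset_sum _ fun i _ =>
      continuous_finset_sum _ fun j _ => (hBcont.matrix_elem i j).abs
  have hgnn : ∀ z, 0 ≤ g z := fun z =>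
    Finset.sum_nonneg fun i _ => Finset.sum_nonneg fun j _ => abs_nonneg _
  obtain ⟨zM, -, hzM⟩ := isCompact_univ.exists_isMaxOn Set.univ_nonempty hgcont.continuousOn
  set M := g zM with hM
  have hM0 : 0 ≤ M := hgnn zM
  obtain ⟨μ, hμ⟩ := Classical.axiomOfChoice
    (fun z₀ : K => local_psd hrpos (C z₀) (hpsd z₀) (hrank z₀))
  have hμpos : ∀ z₀, 0 < μ z₀ := fun z₀ => (hμ z₀).1
  set U : K → Set K := fun z₀ => {z | (∑ i, ∑ j, |C z i j - C z₀ i j|) < μ z₀ / 4} with hU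
  have hUopen : ∀ z₀, IsOpen (U z₀) := by
    intro z₀
    apply isOpen_lt _ continuous_const
    exact continuous_finset_sum _ fun i _ => continuous_finset_sum _ fun j _ =>
      ((hCcont.matrix_elem i j).sub continuous_const).abs
  have hUmem : ∀ z₀, z₀ ∈ U z₀ := by
    intro z₀
    have h0 : (∑ i, ∑ j, |C z₀ i j - C z₀ i j|) = 0 := by simp
    simp only [hU, Set.mem_setOf_eq, h0]
    linarith [hμpos z₀]
  obtain ⟨tF, htF⟩ := isCompact_univ.elim_finite_subcover U hUopen
    (fun z _ => Set.mem_iUnion.2 ⟨z, hUmem z⟩)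
  have htFne : tF.Nonempty := by
    obtain ⟨z⟩ := hK
    obtain ⟨z₀, hz₀, -⟩ := Set.mem_iUnion₂.1 (htF (Set.mem_univ z))
    exact ⟨z₀, hz₀⟩
  set ε : K → ℝ := fun z₀ => μ z₀ / (4 * (M + 1)) with hε
  have hεpos : ∀ z₀, 0 < ε z₀ := fun z₀ => div_pos (hμpos z₀) (by linarith)
  set εm := tF.inf' htFne ε with hεm
  have hεmpos : 0 < εm := (Finset.lt_inf'_iff htFne).2 fun z₀ _ => hεpos z₀
  refine ⟨Real.sqrt εm, Real.sqrt_pos.2 hεmpos, fun z h hh0 hh1 => ?_⟩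
  obtain ⟨z₀, hz₀t, hzU⟩ := Set.mem_iUnion₂.1 (htF (Set.mem_univ z))
  refine (hμ z₀).2 (C z) (B z) (hpsd z) (hrank z) (hherm z) (hker z) (le_of_lt hzU)
    (h^2) (sq_nonneg h) ?_
  have h2 : h^2 ≤ εm := by
    have h2' := pow_le_pow_left₀ hh0 hh1 2
    rwa [Real.sq_sqrt hεmpos.le] at h2'
  have h3 : εm ≤ ε z₀ := Finset.inf'_le ε hz₀t
  have h4 : g z ≤ M + 1 := by
    have h4' : g z ≤ g zM := hzM (Set.mem_univ z)
    have hMM : M = g zM := hM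
    linarith
  have hMne : (M + 1) ≠ 0 := by linarith
  calc h^2 * g z ≤ ε z₀ * (M + 1) :=
        mul_le_mul (by linarith) h4 (hgnn z) (hεpos z₀).le
    _ = μ z₀ / 4 := by
        rw [hε]
        field_simp
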